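/- Let $K_1 \subseteq \mathbb{R}^n$ and $K_2 \subseteq \mathbb{R}^m$ be proper cones and let $A$ be a real $m \times n$ matrix. Then exactly one of the following holds: (1) there exists $x \in K_1$ such that $Ax$ lies in the interior of $K_2$; (2) there exists a nonzero $y \in K_2^*$ such that $-A^t y \in K_1^*$. -/

import Mathlib

open Matrix Set

/-- A proper cone in `ℝ^n`: a convex cone that is closed, pointed and has
nonempty interior. -/
def IsProperCone {n : ℕ} (K : Set (Fin n → ℝ)) : Prop :=
  (∀ x ∈ K, ∀ y ∈ K, x + y ∈ K) ∧
  (∀ a : ℝ, 0 ≤ a → ∀ x ∈ K, a • x ∈ K) ∧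
  IsClosed K ∧
  K ∩ (-K) = {(0 : Fin n → ℝ)} ∧
  (interior K).Nonempty

/-- The dual cone with respect to the Euclidean inner product. -/
def dualCone {n : ℕ} (K : Set (Fin n → ℝ)) : Set (Fin n → ℝ) :=
  {y | ∀ x ∈ K, 0 ≤ ∑ i, y i * x i}

lemma clm_eq_sum {n : ℕ} (f : (Fin n → ℝ) →L[ℝ] ℝ) (z : Fin n → ℝ) :
    f z = ∑ i, f (Pi.single i 1) * z i := by
  have h : z = ∑ i, z i • (Pi.single i 1 : Fin n → ℝ) := by
    conv_lhs => rw [← Finset.univ_sum_single z]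
    refine Finset.sum_congr rfl fun i _ => ?_
    ext j
    simp [Pi.single_apply]
  conv_lhs => rw [h]
  rw [map_sum]
  simp [mul_comm]

lemma dual_pos {n : ℕ} {K : Set (Fin n → ℝ)} {y z : Fin n → ℝ}
    (hy : y ∈ dualCone K) (hy0 : y ≠ 0) (hz : z ∈ interior K) :
    0 < ∑ i, y i * z i := by
  obtain ⟨ε, hε, hball⟩ := Metric.mem_nhds_iff.1 (mem_interior_iff_mem_nhds.1 hz)
  set δ : ℝ := ε / (2 * (‖y‖ + 1)) with hδdef
  have hy1 : (0:ℝ) < ‖y‖ + 1 := by positivity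
  have hδ : 0 < δ := by positivity
  have hmem : z - δ • y ∈ K := by
    apply hball
    simp only [Metric.mem_ball, dist_eq_norm]
    have : z - δ • y - z = -(δ • y) := by ring_nf
    rw [this, norm_neg, norm_smul, Real.norm_eq_abs, abs_of_pos hδ]
    calc δ * ‖y‖ < δ * (‖y‖ + 1) := by nlinarith [hδ]
      _ = ε / 2 := by rw [hδdef]; field_simp
      _ < ε := by linarith
  have h0 := hy _ hmem
  have hsq : 0 < ∑ i, y i * y i := by
    obtain ⟨i, hi⟩ := Function.ne_iff.1 hy0
    have hi' : y i ≠ 0 := hi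
    exact Finset.sum_pos' (fun j _ => mul_self_nonneg _)
      ⟨i, Finset.mem_univ i, mul_self_pos.2 hi'⟩
  have hexp : ∑ i, y i * (z - δ • y) i = (∑ i, y i * z i) - δ * ∑ i, y i * y i := by
    rw [Finset.mul_sum, ← Finset.sum_sub_distrib]
    refine Finset.sum_congr rfl fun i _ => ?_
    simp [Pi.sub_apply, Pi.smul_apply, smul_eq_mul]
    ring
  nlinarith [h0, hexp]

lemma adjoint_sum {n m : ℕ} (A : Matrix (Fin m) (Fin n) ℝ) (y : Fin m → ℝ) (x : Fin n → ℝ) :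
    ∑ j, y j * A.mulVec x j = ∑ i, Aᵀ.mulVec y i * x i := by
  simp only [Matrix.mulVec, dotProduct, Matrix.transpose_apply, Finset.mul_sum,
    Finset.sum_mul]
  rw [Finset.sum_comm]
  exact Finset.sum_congr rfl fun i _ => Finset.sum_congr rfl fun j _ => by ring

/-- Theorem of the alternative: exactly one of the two systems is solvable. -/
theorem stmt_7 {n m : ℕ} (K₁ : Set (Fin n → ℝ)) (K₂ : Set (Fin m → ℝ))
    (hK₁ : IsProperCone K₁) (hK₂ : IsProperCone K₂)
    (A : Matrix (Fin m) (Fin n) ℝ) :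
    Xor' (∃ x ∈ K₁, A.mulVec x ∈ interior K₂)
      (∃ y ∈ dualCone K₂, y ≠ 0 ∧ -(Aᵀ.mulVec y) ∈ dualCone K₁) := by
  obtain ⟨hadd₁, hsmul₁, hcl₁, hpt₁, hint₁⟩ := hK₁
  obtain ⟨hadd₂, hsmul₂, hcl₂, hpt₂, hint₂⟩ := hK₂
  have h0K₁ : (0 : Fin n → ℝ) ∈ K₁ := by
    have h : (0 : Fin n → ℝ) ∈ K₁ ∩ (-K₁) := by rw [hpt₁]; rfl
    exact h.1
  have hconv₁ : Convex ℝ K₁ := fun x hx y hy a b ha hb _ =>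
    hadd₁ _ (hsmul₁ a ha x hx) _ (hsmul₁ b hb y hy)
  have hconv₂ : Convex ℝ K₂ := fun x hx y hy a b ha hb _ =>
    hadd₂ _ (hsmul₂ a ha x hx) _ (hsmul₂ b hb y hy)
  have hnotboth : ¬ ((∃ x ∈ K₁, A.mulVec x ∈ interior K₂) ∧
      (∃ y ∈ dualCone K₂, y ≠ 0 ∧ -(Aᵀ.mulVec y) ∈ dualCone K₁)) := by
    rintro ⟨⟨x, hx, hAx⟩, ⟨y, hy, hy0, hAty⟩⟩
    have hpos : 0 < ∑ j, y j * A.mulVec x j := dual_pos hy hy0 hAx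
    have h2 := hAty x hx
    simp only [Pi.neg_apply, neg_mul, Finset.sum_neg_distrib] at h2
    rw [adjoint_sum A y x] at hpos
    linarith
  by_cases h1 : ∃ x ∈ K₁, A.mulVec x ∈ interior K₂
  · exact Or.inl ⟨h1, fun h2 => hnotboth ⟨h1, h2⟩⟩
  · refine Or.inr ⟨?_, h1⟩
    have hdisj : Disjoint (interior K₂) (A.mulVec '' K₁) := by
      rw [Set.disjoint_left]
      rintro a ha ⟨x, hx, rfl⟩
      exact h1 ⟨x, hx, ha⟩
    have himg : Convex ℝ (A.mulVec '' K₁) := by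
      have := hconv₁.linear_image A.mulVecLin
      exact this
    obtain ⟨f, u, hfs, hft⟩ :=
      geometric_hahn_banach_open hconv₂.interior isOpen_interior himg hdisj
    obtain ⟨a₀, ha₀⟩ := hint₂
    have hu0 : u ≤ 0 := by
      have := hft _ ⟨0, h0K₁, rfl⟩
      simpa [Matrix.mulVec_zero] using this
    have hfneg : ∀ k ∈ K₂, f k ≤ 0 := by
      intro k hk
      have ht : ∀ t : ℝ, t ∈ Set.Ioo (0:ℝ) 1 → t * f a₀ + (1 - t) * f k ≤ 0 := by
        rintro t ⟨ht0, ht1⟩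
        have hmem := hconv₂.combo_interior_self_mem_interior ha₀ hk ht0
          (by linarith : (0:ℝ) ≤ 1 - t) (by ring)
        have := hfs _ hmem
        simp only [map_add, _root_.map_smul, smul_eq_mul] at this
        linarith
      have htend : Filter.Tendsto (fun t : ℝ => t * f a₀ + (1 - t) * f k)
          (nhdsWithin 0 (Set.Ioi 0)) (nhds (f k)) := by
        have hc : Continuous (fun t : ℝ => t * f a₀ + (1 - t) * f k) := by continuity
        have h := (hc.tendsto 0).mono_left (nhdsWithin_le_nhds (s := Set.Ioi (0:ℝ)))
        simpa using h
      exact le_of_tendsto htend (Filter.eventually_of_mem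
        (Ioo_mem_nhdsGT_of_mem (Set.mem_Ico.2 ⟨le_refl (0:ℝ), one_pos⟩)) ht)
    have hfApos : ∀ x ∈ K₁, 0 ≤ f (A.mulVec x) := by
      intro x hx
      by_contra hneg
      push_neg at hneg
      set t : ℝ := (u - 1) / f (A.mulVec x) with htdef
      have ht : 0 < t := div_pos_of_neg_of_neg (by linarith) hneg
      have hmem := hft _ ⟨t • x, hsmul₁ t ht.le x hx, rfl⟩
      have heq : A.mulVec (t • x) = t • A.mulVec x := by
        rw [← Matrix.mulVecLin_apply, ← Matrix.mulVecLin_apply, _root_.map_smul]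
      rw [heq, _root_.map_smul, smul_eq_mul, htdef, div_mul_cancel₀ _ (ne_of_lt hneg)] at hmem
      linarith
    refine ⟨fun j => -(f (Pi.single j 1)), ?_, ?_, ?_⟩
    · intro k hk
      have := hfneg k hk
      rw [clm_eq_sum f k] at this
      have : 0 ≤ -∑ i, f (Pi.single i 1) * k i := by linarith
      simpa [Finset.sum_neg_distrib, neg_mul] using this
    · intro hzero
      have hfa : f a₀ < 0 := lt_of_lt_of_le (hfs a₀ ha₀) hu0
      have : f a₀ = 0 := by
        rw [clm_eq_sum f a₀]
        refine Finset.sum_eq_zero fun j _ => ?_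
        have : -(f (Pi.single j 1)) = 0 := congrFun hzero j
        have h0 : f (Pi.single j 1) = 0 := by linarith [this]
        rw [h0, zero_mul]
      linarith
    · intro x hx
      have hkey := adjoint_sum A (fun j => -(f (Pi.single j 1))) x
      have hsum : ∑ j, -(f (Pi.single j 1)) * A.mulVec x j = -(f (A.mulVec x)) := by
        rw [clm_eq_sum f (A.mulVec x)]
        simp [neg_mul, Finset.sum_neg_distrib]
      have hx0 := hfApos x hx
      have : ∑ i, (-(Aᵀ.mulVec fun j => -(f (Pi.single j 1)))) i * x i
          = f (A.mulVec x) := by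
        simp only [Pi.neg_apply, neg_mul, Finset.sum_neg_distrib]
        rw [← hkey, hsum]
        ring
      rw [this]
      exact hx0
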